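/- For every p ≥ 0 and every q ∈ (0,1/2] with p + q ≤ 1: |H(p+q) - H(p)| ≤ H(q), and moreover H(q) ≤ 2·q·log₂(1/q). -/

import Mathlib

open MeasureTheory Filter

noncomputable def binEnt (p : ℝ) : ℝ :=
  -(p * Real.logb 2 p) - (1 - p) * Real.logb 2 (1 - p)

noncomputable def klBin (a b : ℝ) : ℝ :=
  a * Real.logb 2 (a / b) + (1 - a) * Real.logb 2 ((1 - a) / (1 - b))

open Real in
lemma binEnt_eq (x : ℝ) :
    binEnt x = (Real.log 2)⁻¹ • (negMulLog x + negMulLog (1 - x)) := by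
  simp only [binEnt, Real.logb, negMulLog, smul_eq_mul]
  ring

@[simp] lemma binEnt_zero : binEnt 0 = 0 := by
  simp [binEnt]

lemma binEnt_symm (x : ℝ) : binEnt (1 - x) = binEnt x := by
  simp only [binEnt_eq, sub_sub_cancel]
  ring

lemma concaveOn_binEnt : ConcaveOn ℝ (Set.Icc (0:ℝ) 1) binEnt := by
  have h1 : ConcaveOn ℝ (Set.Icc (0:ℝ) 1) Real.negMulLog :=
    Real.concaveOn_negMulLog.subset (fun x hx => hx.1) (convex_Icc 0 1)
  have h2 : ConcaveOn ℝ (Set.Icc (0:ℝ) 1) (fun x => Real.negMulLog (1 - x)) := by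
    refine ⟨convex_Icc 0 1, ?_⟩
    intro x hx y hy a b ha hb hab
    have hx' : (1:ℝ) - x ∈ Set.Icc (0:ℝ) 1 := ⟨by linarith [hx.2], by linarith [hx.1]⟩
    have hy' : (1:ℝ) - y ∈ Set.Icc (0:ℝ) 1 := ⟨by linarith [hy.2], by linarith [hy.1]⟩
    have := h1.2 hx' hy' ha hb hab
    have heq : (1:ℝ) - (a • x + b • y) = a • (1 - x) + b • (1 - y) := by
      simp only [smul_eq_mul]; nlinarith [hab]
    show a • Real.negMulLog (1 - x) + b • Real.negMulLog (1 - y)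
      ≤ Real.negMulLog (1 - (a • x + b • y))
    rw [heq]
    exact this
  have h3 : ConcaveOn ℝ (Set.Icc (0:ℝ) 1)
      (fun x => (Real.log 2)⁻¹ • (Real.negMulLog x + Real.negMulLog (1 - x))) :=
    (h1.add h2).smul (by positivity)
  have : binEnt = fun x => (Real.log 2)⁻¹ • (Real.negMulLog x + Real.negMulLog (1 - x)) := by
    funext x; exact binEnt_eq x
  rw [this]
  exact h3

lemma binEnt_subadd (a b : ℝ) (ha : 0 ≤ a) (hb : 0 ≤ b) (hab0 : 0 < a + b)
    (hab : a + b ≤ 1) : binEnt (a + b) ≤ binEnt a + binEnt b := by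
  set s := a + b with hs
  have hsmem : s ∈ Set.Icc (0:ℝ) 1 := ⟨le_of_lt hab0, hab⟩
  have h0mem : (0:ℝ) ∈ Set.Icc (0:ℝ) 1 := ⟨le_refl 0, by norm_num⟩
  have hA : binEnt a ≥ (a / s) * binEnt s := by
    have := concaveOn_binEnt.2 h0mem hsmem (by positivity : (0:ℝ) ≤ b / s)
      (by positivity : (0:ℝ) ≤ a / s) (by field_simp; try linarith)
    have heq : (b / s) • (0:ℝ) + (a / s) • s = a := by
      rw [smul_eq_mul, smul_eq_mul, mul_zero, zero_add, div_mul_cancel₀ _ (ne_of_gt hab0)]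
    rw [heq] at this
    simpa [binEnt_zero] using this
  have hB : binEnt b ≥ (b / s) * binEnt s := by
    have := concaveOn_binEnt.2 h0mem hsmem (by positivity : (0:ℝ) ≤ a / s)
      (by positivity : (0:ℝ) ≤ b / s) (by field_simp; try linarith)
    have heq : (a / s) • (0:ℝ) + (b / s) • s = b := by
      rw [smul_eq_mul, smul_eq_mul, mul_zero, zero_add, div_mul_cancel₀ _ (ne_of_gt hab0)]
    rw [heq] at this
    simpa [binEnt_zero] using this
  have hsum : a / s + b / s = 1 := by
    rw [← add_div, hs]
    exact div_self (ne_of_gt hab0)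
  have : binEnt s = (a / s) * binEnt s + (b / s) * binEnt s := by
    rw [← add_mul, hsum, one_mul]
  linarith

lemma concaveOn_F : ConcaveOn ℝ (Set.Icc (0:ℝ) (1/2))
    (fun x => Real.negMulLog x - Real.negMulLog (1 - x)) := by
  have hint : interior (Set.Icc (0:ℝ) (1/2)) = Set.Ioo (0:ℝ) (1/2) := by
    simp [interior_Icc]
  apply concaveOn_of_hasDerivWithinAt2_nonpos (f' := fun x => -Real.log x - Real.log (1 - x) - 2)
    (f'' := fun x => -x⁻¹ + (1 - x)⁻¹) (convex_Icc 0 (1/2))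
  · exact (Real.continuous_negMulLog.sub
      (Real.continuous_negMulLog.comp (continuous_const.sub continuous_id))).continuousOn
  · intro x hx
    rw [hint] at hx
    have hx0 : x ≠ 0 := ne_of_gt hx.1
    have hx1 : (1:ℝ) - x ≠ 0 := by have := hx.2; intro h; nlinarith
    have d1 : HasDerivAt Real.negMulLog (-Real.log x - 1) x := Real.hasDerivAt_negMulLog hx0
    have d2 : HasDerivAt (fun y : ℝ => Real.negMulLog (1 - y))
        ((-Real.log (1 - x) - 1) * (-1)) x := by
      exact (Real.hasDerivAt_negMulLog hx1).comp x ((hasDerivAt_id x).const_sub 1)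
    have := (d1.sub d2)
    have heq : (-Real.log x - 1) - (-Real.log (1 - x) - 1) * (-1)
        = -Real.log x - Real.log (1 - x) - 2 := by ring
    rw [heq] at this
    exact this.hasDerivWithinAt
  · intro x hx
    rw [hint] at hx
    have hx0 : x ≠ 0 := ne_of_gt hx.1
    have hx1 : (1:ℝ) - x ≠ 0 := by have := hx.2; intro h; nlinarith
    have d1 : HasDerivAt Real.log x⁻¹ x := Real.hasDerivAt_log hx0
    have d2 : HasDerivAt (fun y : ℝ => Real.log (1 - y)) ((1 - x)⁻¹ * (-1)) x :=
      (Real.hasDerivAt_log hx1).comp x ((hasDerivAt_id x).const_sub 1)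
    have := ((d1.neg.sub d2).sub_const 2)
    have heq : (-x⁻¹ - (1 - x)⁻¹ * (-1)) = -x⁻¹ + (1 - x)⁻¹ := by ring
    rw [heq] at this
    exact this.hasDerivWithinAt
  · intro x hx
    rw [hint] at hx
    have h1 : (0:ℝ) < x := hx.1
    have h2 : x < 1/2 := hx.2
    have h3 : (0:ℝ) < 1 - x := by linarith
    have : (1 - x)⁻¹ ≤ x⁻¹ := by
      apply inv_anti₀ h1 (by linarith)
    linarith

lemma F_nonneg (q : ℝ) (hq0 : 0 ≤ q) (hq : q ≤ 1/2) :
    0 ≤ Real.negMulLog q - Real.negMulLog (1 - q) := by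
  have h0 : (0:ℝ) ∈ Set.Icc (0:ℝ) (1/2) := by constructor <;> norm_num
  have hh : (1/2:ℝ) ∈ Set.Icc (0:ℝ) (1/2) := by constructor <;> norm_num
  have ha : (0:ℝ) ≤ 1 - 2*q := by linarith
  have hb : (0:ℝ) ≤ 2*q := by linarith
  have := concaveOn_F.2 h0 hh ha hb (by ring)
  have heq : (1 - 2*q) • (0:ℝ) + (2*q) • (1/2:ℝ) = q := by
    simp only [smul_eq_mul]; ring
  rw [heq] at this
  simp only [smul_eq_mul, Real.negMulLog_zero, Real.negMulLog_one] at this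
  norm_num at this
  linarith

theorem entropy_diff_le (p q : ℝ) (hp : 0 ≤ p) (hq0 : 0 < q) (hq : q ≤ 1 / 2)
    (hpq : p + q ≤ 1) :
    |binEnt (p + q) - binEnt p| ≤ binEnt q ∧ binEnt q ≤ 2 * q * Real.logb 2 (1 / q) := by
  constructor
  · rw [abs_le]
    constructor
    · -- binEnt p - binEnt (p+q) ≤ binEnt q, via symmetry
      have ha : (0:ℝ) ≤ 1 - p - q := by linarith
      have h := binEnt_subadd (1 - p - q) q ha (le_of_lt hq0) (by linarith) (by linarith)
      have e1 : (1 - p - q) + q = 1 - p := by ring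
      rw [e1] at h
      have e2 : binEnt (1 - p) = binEnt p := binEnt_symm p
      have e3 : binEnt (1 - p - q) = binEnt (p + q) := by
        have : (1:ℝ) - (p + q) = 1 - p - q := by ring
        rw [← this, binEnt_symm]
      rw [e2, e3] at h
      linarith
    · have h := binEnt_subadd p q hp (le_of_lt hq0) (by linarith) hpq
      linarith
  · have hF := F_nonneg q (le_of_lt hq0) hq
    have hlog2 : (0:ℝ) < Real.log 2 := Real.log_pos (by norm_num)
    have hq1 : q ≠ 0 := ne_of_gt hq0
    have e : 2 * q * Real.logb 2 (1 / q) - binEnt q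
        = (Real.negMulLog q - Real.negMulLog (1 - q)) / Real.log 2 := by
      simp only [binEnt, Real.logb, Real.negMulLog, one_div, Real.log_inv]
      field_simp
      ring
    nlinarith [div_nonneg hF (le_of_lt hlog2)]
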